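/- Let f: R^n → R be proper, closed, convex and μ-strongly convex, and let f_η(x) = min_u { f(u) + (1/(2η))‖u - x‖² } be its Moreau envelope with parameter η > 0. Then f_η is μ/(ημ + 1)-strongly convex. -/

import Mathlib

open Set RealInnerProductSpace

/-- Scalar inequality at the heart of the strong convexity of the Moreau envelope. -/
lemma moreau_scalar_key (μ η a b P Q I S J D : ℝ) (hμ : 0 < μ) (hη : 0 < η)
    (ha : 0 ≤ a) (hb : 0 ≤ b) (hab : a + b = 1)
    (hS : S = P - 2 * I + Q)
    (hpos : 0 ≤ (η * μ + 1) ^ 2 * S + 2 * (η * μ * (η * μ + 1)) * J + (η * μ) ^ 2 * D) :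
    (a ^ 2 * P + 2 * (a * b) * I + b ^ 2 * Q) / (2 * η) ≤
      a * (P / (2 * η)) + b * (Q / (2 * η)) + a * b * (μ / 2 * (S + 2 * J + D))
        - a * b * (μ / (η * μ + 1) / 2 * D) := by
  have h1 : (0:ℝ) < η * μ + 1 := by positivity
  have key2 : 0 ≤ S / (2 * η) + μ / 2 * (S + 2 * J + D) - μ / (η * μ + 1) / 2 * D := by
    have e : S / (2 * η) + μ / 2 * (S + 2 * J + D) - μ / (η * μ + 1) / 2 * D =
        ((η * μ + 1) ^ 2 * S + 2 * (η * μ * (η * μ + 1)) * J + (η * μ) ^ 2 * D) /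
          (2 * η * (η * μ + 1)) := by
      field_simp
      ring
    rw [e]
    exact div_nonneg hpos (by positivity)
  have hb' : b = 1 - a := by linarith
  subst hb'
  have e2 : a * (P / (2 * η)) + (1 - a) * (Q / (2 * η))
        + a * (1 - a) * (μ / 2 * (S + 2 * J + D))
        - a * (1 - a) * (μ / (η * μ + 1) / 2 * D)
        - (a ^ 2 * P + 2 * (a * (1 - a)) * I + (1 - a) ^ 2 * Q) / (2 * η)
      = a * (1 - a) *
          (S / (2 * η) + μ / 2 * (S + 2 * J + D) - μ / (η * μ + 1) / 2 * D) := by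
    subst hS
    field_simp
    ring
  nlinarith [mul_nonneg (mul_nonneg ha hb) key2]

/-- The objective of the Moreau envelope of a strongly convex function is uniformly
bounded below. -/
lemma moreau_bddBelow {n : ℕ} (μ η : ℝ) (hμ : 0 < μ) (hη : 0 < η)
    (f : EuclideanSpace ℝ (Fin n) → ℝ) (hf : StrongConvexOn Set.univ μ f) :
    ∃ B : ℝ, ∀ x u : EuclideanSpace ℝ (Fin n), B ≤ f u + ‖u - x‖ ^ 2 / (2 * η) := by
  set g : EuclideanSpace ℝ (Fin n) → ℝ := fun u => f u - μ / 2 * ‖u‖ ^ 2 with hgdef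
  have hg : ConvexOn ℝ univ g := strongConvexOn_iff_convex.mp hf
  have hcont : Continuous g := continuousOn_univ.mp (hg.continuousOn isOpen_univ)
  obtain ⟨v0, hv0, hmin⟩ := (isCompact_closedBall (0 : EuclideanSpace ℝ (Fin n)) 1).exists_isMinOn
    ⟨0, Metric.mem_closedBall_self zero_le_one⟩ hcont.continuousOn
  set C := g v0 with hC
  set M := |C| + |g 0| with hM
  have hM0 : 0 ≤ M := by positivity
  have hlin : ∀ u : EuclideanSpace ℝ (Fin n), -M * (1 + ‖u‖) ≤ g u := by
    intro u
    by_cases hr : ‖u‖ ≤ 1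
    · have hu : u ∈ Metric.closedBall (0 : EuclideanSpace ℝ (Fin n)) 1 := by
        simpa [Metric.mem_closedBall, dist_eq_norm] using hr
      have h1 : C ≤ g u := hmin hu
      have h2 : -|C| ≤ C := neg_abs_le C
      have h3 : 0 ≤ ‖u‖ := norm_nonneg u
      nlinarith [abs_nonneg (g 0)]
    · push_neg at hr
      set r := ‖u‖ with hrdef
      have hr0 : 0 < r := lt_trans one_pos hr
      set v : EuclideanSpace ℝ (Fin n) := r⁻¹ • u with hv
      have hvnorm : ‖v‖ = 1 := by
        rw [hv, norm_smul, Real.norm_eq_abs, abs_of_pos (inv_pos.mpr hr0)]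
        field_simp
        exact hrdef.symm
      have hvball : v ∈ Metric.closedBall (0 : EuclideanSpace ℝ (Fin n)) 1 := by
        simp [Metric.mem_closedBall, dist_eq_norm, hvnorm]
      have ha1 : (0:ℝ) ≤ 1 - r⁻¹ := by
        have : r⁻¹ ≤ 1 := by
          rw [inv_le_one_iff₀]; right; exact hr.le
        linarith
      have hb1 : (0:ℝ) ≤ r⁻¹ := by positivity
      have hab1 : (1 - r⁻¹) + r⁻¹ = 1 := by ring
      have hconv := hg.2 (mem_univ (0 : EuclideanSpace ℝ (Fin n))) (mem_univ u) ha1 hb1 hab1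
      rw [smul_zero, zero_add] at hconv
      have hCv : C ≤ g v := hmin hvball
      have hconv' : g v ≤ (1 - r⁻¹) * g 0 + r⁻¹ * g u := by
        simpa [smul_eq_mul] using hconv
      -- multiply by r > 0 : r * g v ≤ (r - 1) * g 0 + g u
      have hmul : r * g v ≤ (r - 1) * g 0 + g u := by
        have h := mul_le_mul_of_nonneg_left hconv' hr0.le
        have e : r * ((1 - r⁻¹) * g 0 + r⁻¹ * g u) = (r - 1) * g 0 + g u := by
          field_simp
        linarith [e ▸ h]
      have h2 : -|C| ≤ C := neg_abs_le C
      have h3 : g 0 ≤ |g 0| := le_abs_self (g 0)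
      nlinarith [mul_le_mul_of_nonneg_left h2 hr0.le, abs_nonneg C, abs_nonneg (g 0),
        mul_le_mul_of_nonneg_left h3 (by linarith : (0:ℝ) ≤ r - 1)]
  refine ⟨-M - M ^ 2 / (2 * μ), fun x u => ?_⟩
  have h1 := hlin u
  have h2 : f u = g u + μ / 2 * ‖u‖ ^ 2 := by rw [hgdef]; ring
  have h3 : 0 ≤ ‖u - x‖ ^ 2 / (2 * η) := by positivity
  have h4 : 0 ≤ (μ * ‖u‖ - M) ^ 2 / (2 * μ) := div_nonneg (sq_nonneg _) (by positivity)
  have h5 : (μ * ‖u‖ - M) ^ 2 / (2 * μ)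
      = μ / 2 * ‖u‖ ^ 2 - M * ‖u‖ + M ^ 2 / (2 * μ) := by
    field_simp
    ring
  clear_value g C M
  linarith

theorem moreau_envelope_strongConvex {n : ℕ} (μ η : ℝ) (hμ : 0 < μ) (hη : 0 < η)
    (f : EuclideanSpace ℝ (Fin n) → ℝ)
    (hf : StrongConvexOn Set.univ μ f) (hlsc : LowerSemicontinuous f) :
    StrongConvexOn Set.univ (μ / (η * μ + 1))
      (fun x => ⨅ u : EuclideanSpace ℝ (Fin n), (f u + ‖u - x‖ ^ 2 / (2 * η))) := by
  obtain ⟨B, hB⟩ := moreau_bddBelow μ η hμ hη f hf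
  set F : EuclideanSpace ℝ (Fin n) → ℝ :=
    fun x => ⨅ u : EuclideanSpace ℝ (Fin n), (f u + ‖u - x‖ ^ 2 / (2 * η)) with hF
  have hbdd : ∀ x : EuclideanSpace ℝ (Fin n),
      BddBelow (Set.range fun u : EuclideanSpace ℝ (Fin n) => f u + ‖u - x‖ ^ 2 / (2 * η)) := by
    intro x
    exact ⟨B, by rintro _ ⟨u, rfl⟩; exact hB x u⟩
  refine ⟨convex_univ, ?_⟩
  intro x _ y _ a b ha hb hab
  simp only [smul_eq_mul]
  rcases eq_or_lt_of_le ha with rfl | ha'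
  · have hb1 : b = 1 := by linarith
    subst hb1
    simp
  rcases eq_or_lt_of_le hb with rfl | hb'
  · have ha1 : a = 1 := by linarith
    subst ha1
    simp
  -- main case : 0 < a, 0 < b
  set z := a • x + b • y with hz
  set σ2 : ℝ := μ / (η * μ + 1) / 2 * ‖x - y‖ ^ 2 with hσ2
  -- key pointwise inequality
  have key : ∀ u v : EuclideanSpace ℝ (Fin n),
      F z ≤ a * (f u + ‖u - x‖ ^ 2 / (2 * η)) + b * (f v + ‖v - y‖ ^ 2 / (2 * η))
        - a * b * σ2 := by
    intro u v
    set p := u - x with hp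
    set q := v - y with hq
    set s := p - q with hs
    set d := x - y with hd
    set w := a • u + b • v with hw
    have hwz : w - z = a • p + b • q := by rw [hw, hz, hp, hq]; module
    have huv : u - v = s + d := by rw [hs, hd, hp, hq]; module
    have hstep1 : F z ≤ f w + ‖w - z‖ ^ 2 / (2 * η) := ciInf_le (hbdd z) w
    have hstep2 : f w ≤ a * f u + b * f v - a * b * (μ / 2 * ‖u - v‖ ^ 2) := by
      simpa [smul_eq_mul] using hf.2 (mem_univ u) (mem_univ v) ha hb hab
    have hnorm1 : ‖a • p + b • q‖ ^ 2
        = a ^ 2 * ‖p‖ ^ 2 + 2 * (a * b) * ⟪p, q⟫ + b ^ 2 * ‖q‖ ^ 2 := by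
      rw [norm_add_sq_real, norm_smul, norm_smul, real_inner_smul_left, real_inner_smul_right,
        Real.norm_eq_abs, Real.norm_eq_abs, abs_of_pos ha', abs_of_pos hb']
      ring
    have hnorm2 : ‖s + d‖ ^ 2 = ‖s‖ ^ 2 + 2 * ⟪s, d⟫ + ‖d‖ ^ 2 := norm_add_sq_real s d
    have hSeq : ‖s‖ ^ 2 = ‖p‖ ^ 2 - 2 * ⟪p, q⟫ + ‖q‖ ^ 2 := norm_sub_sq_real p q
    have hposmul : (0:ℝ) < η * μ := by positivity
    have hpos : 0 ≤ (η * μ + 1) ^ 2 * ‖s‖ ^ 2 + 2 * (η * μ * (η * μ + 1)) * ⟪s, d⟫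
        + (η * μ) ^ 2 * ‖d‖ ^ 2 := by
      have hexp : ‖(η * μ + 1) • s + (η * μ) • d‖ ^ 2
          = (η * μ + 1) ^ 2 * ‖s‖ ^ 2 + 2 * (η * μ * (η * μ + 1)) * ⟪s, d⟫
            + (η * μ) ^ 2 * ‖d‖ ^ 2 := by
        rw [norm_add_sq_real, norm_smul, norm_smul, real_inner_smul_left, real_inner_smul_right,
          Real.norm_eq_abs, Real.norm_eq_abs, abs_of_pos (by positivity : (0:ℝ) < η * μ + 1),
          abs_of_pos hposmul]
        ring
      rw [← hexp]
      positivity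
    have hscal := moreau_scalar_key μ η a b (‖p‖ ^ 2) (‖q‖ ^ 2) (⟪p, q⟫) (‖s‖ ^ 2)
      (⟪s, d⟫) (‖d‖ ^ 2) hμ hη ha hb hab hSeq hpos
    rw [hwz] at hstep1
    rw [huv, hnorm2] at hstep2
    rw [hnorm1] at hstep1
    rw [hσ2]
    linarith
  -- pass to the infimum via an ε argument
  by_contra hcon
  push_neg at hcon
  set R := a * F x + b * F y - a * b * σ2 with hR
  have hRlt : R < F z := hcon
  set ε := (F z - R) / 2 with hε
  have hε0 : 0 < ε := by rw [hε]; linarith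
  have hεa : 0 < ε / (2 * a) := by positivity
  have hεb : 0 < ε / (2 * b) := by positivity
  obtain ⟨u, hu⟩ : ∃ u : EuclideanSpace ℝ (Fin n),
      f u + ‖u - x‖ ^ 2 / (2 * η) < F x + ε / (2 * a) :=
    exists_lt_of_ciInf_lt (lt_add_of_pos_right _ hεa)
  obtain ⟨v, hv⟩ : ∃ v : EuclideanSpace ℝ (Fin n),
      f v + ‖v - y‖ ^ 2 / (2 * η) < F y + ε / (2 * b) :=
    exists_lt_of_ciInf_lt (lt_add_of_pos_right _ hεb)
  have h1 : a * (f u + ‖u - x‖ ^ 2 / (2 * η)) < a * F x + ε / 2 := by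
    have := mul_lt_mul_of_pos_left hu ha'
    have ha2 : a * (ε / (2 * a)) = ε / 2 := by field_simp
    nlinarith
  have h2 : b * (f v + ‖v - y‖ ^ 2 / (2 * η)) < b * F y + ε / 2 := by
    have := mul_lt_mul_of_pos_left hv hb'
    have hb2 : b * (ε / (2 * b)) = ε / 2 := by field_simp
    nlinarith
  have := key u v
  have : F z < F z := by
    calc F z ≤ a * (f u + ‖u - x‖ ^ 2 / (2 * η)) + b * (f v + ‖v - y‖ ^ 2 / (2 * η))
        - a * b * σ2 := key u v
      _ < (a * F x + ε / 2) + (b * F y + ε / 2) - a * b * σ2 := by linarith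
      _ = R + ε := by rw [hR]; ring
      _ = (F z + R) / 2 := by rw [hε]; ring
      _ < F z := by linarith
  exact absurd this (lt_irrefl _)
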